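/- The integral from 0 to 1 of x²/sqrt(1-x^4) dx equals Γ(3/4)²/sqrt(2π). -/

import Mathlib

open Real MeasureTheory Set

lemma image_pow4 : (fun x : ℝ => x ^ 4) '' Ioo 0 1 = Ioo (0:ℝ) 1 := by
  ext y
  constructor
  · rintro ⟨x, ⟨hx0, hx1⟩, rfl⟩
    exact ⟨by positivity, pow_lt_one₀ hx0.le hx1 (by norm_num)⟩
  · rintro ⟨hy0, hy1⟩
    refine ⟨y ^ ((1:ℝ)/4), ⟨by positivity, Real.rpow_lt_one hy0.le hy1 (by norm_num)⟩, ?_⟩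
    have : (y ^ ((1:ℝ)/4)) ^ (4:ℕ) = y ^ (((1:ℝ)/4) * 4) := by
      rw [← Real.rpow_natCast (y ^ ((1:ℝ)/4)) 4, ← Real.rpow_mul hy0.le]
      norm_num
    simpa using this.trans (by norm_num)

lemma subst_step :
    ∫ x in Ioo (0:ℝ) 1, x ^ (-(1/4) : ℝ) * (1 - x) ^ (-(1/2) : ℝ) =
      4 * ∫ x in Ioo (0:ℝ) 1, x ^ 2 / Real.sqrt (1 - x ^ 4) := by
  have hderiv : ∀ x ∈ Ioo (0:ℝ) 1,
      HasDerivWithinAt (fun x : ℝ => x ^ 4) (4 * x ^ 3) (Ioo 0 1) x := by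
    intro x _
    simpa using (hasDerivAt_pow 4 x).hasDerivWithinAt
  have hinj : InjOn (fun x : ℝ => x ^ 4) (Ioo 0 1) := by
    intro a ha b hb h
    simp only at h
    rcases lt_trichotomy a b with hab | hab | hab
    · exact absurd h (ne_of_lt (pow_lt_pow_left₀ hab ha.1.le (by norm_num)))
    · exact hab
    · exact absurd h.symm (ne_of_lt (pow_lt_pow_left₀ hab hb.1.le (by norm_num)))
  have := integral_image_eq_integral_abs_deriv_smul measurableSet_Ioo hderiv hinj
    (fun x => x ^ (-(1/4) : ℝ) * (1 - x) ^ (-(1/2) : ℝ))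
  rw [image_pow4] at this
  rw [this, ← MeasureTheory.integral_const_mul]
  apply setIntegral_congr_fun measurableSet_Ioo
  intro x ⟨hx0, hx1⟩
  have hx4 : (0:ℝ) < 1 - x ^ 4 := by nlinarith [pow_lt_one₀ hx0.le hx1 (show 4 ≠ 0 by norm_num)]
  have h1 : (x ^ 4 : ℝ) ^ (-(1/4) : ℝ) = x⁻¹ := by
    rw [← Real.rpow_natCast x 4, ← Real.rpow_mul hx0.le]
    norm_num
    exact Real.rpow_neg_one x
  have h2 : (1 - x ^ 4 : ℝ) ^ (-(1/2) : ℝ) = (Real.sqrt (1 - x ^ 4))⁻¹ := by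
    rw [Real.rpow_neg hx4.le, Real.sqrt_eq_rpow]
  have hs : Real.sqrt (1 - x ^ 4) ≠ 0 := Real.sqrt_ne_zero'.mpr hx4
  simp only [smul_eq_mul, h1, h2, abs_of_nonneg (by positivity : (0:ℝ) ≤ 4 * x ^ 3)]
  field_simp

lemma beta_step :
    (Complex.betaIntegral (3/4) (1/2)) =
      ((∫ x in Ioo (0:ℝ) 1, x ^ (-(1/4) : ℝ) * (1 - x) ^ (-(1/2) : ℝ) : ℝ) : ℂ) := by
  rw [Complex.betaIntegral, intervalIntegral.integral_of_le zero_le_one,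
    MeasureTheory.integral_Ioc_eq_integral_Ioo]
  have hcast : ((∫ x in Ioo (0:ℝ) 1, x ^ (-(1/4) : ℝ) * (1 - x) ^ (-(1/2) : ℝ) : ℝ) : ℂ)
      = ∫ x in Ioo (0:ℝ) 1, ((x ^ (-(1/4) : ℝ) * (1 - x) ^ (-(1/2) : ℝ) : ℝ) : ℂ) :=
    (integral_ofReal (𝕜 := ℂ)).symm
  rw [hcast]
  apply setIntegral_congr_fun measurableSet_Ioo
  intro x ⟨hx0, hx1⟩
  have h1 : ((x:ℂ)) ^ ((3/4 : ℂ) - 1) = ((x ^ (-(1/4) : ℝ) : ℝ) : ℂ) := by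
    rw [Complex.ofReal_cpow hx0.le]
    norm_num
  have h2 : ((1 - (x:ℂ))) ^ ((1/2 : ℂ) - 1) = (((1 - x) ^ (-(1/2) : ℝ) : ℝ) : ℂ) := by
    rw [Complex.ofReal_cpow (by linarith : (0:ℝ) ≤ 1 - x)]
    push_cast
    norm_num
  simp only [h1, h2, Complex.ofReal_mul]

lemma gamma_val :
    ∫ x in Ioo (0:ℝ) 1, x ^ (-(1/4) : ℝ) * (1 - x) ^ (-(1/2) : ℝ) =
      Real.Gamma (3/4) * Real.Gamma (1/2) / Real.Gamma (5/4) := by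
  have hb := Complex.Gamma_mul_Gamma_eq_betaIntegral
    (s := 3/4) (t := 1/2) (by norm_num) (by norm_num)
  have h54 : Real.Gamma (5/4) ≠ 0 := (Real.Gamma_pos_of_pos (by norm_num)).ne'
  have hc : ((3:ℂ)/4 + 1/2) = ((5/4 : ℝ) : ℂ) := by push_cast; norm_num
  rw [beta_step, hc, show ((3:ℂ)/4) = ((3/4:ℝ):ℂ) by push_cast; norm_num,
    show ((1:ℂ)/2) = ((1/2:ℝ):ℂ) by push_cast; norm_num,
    Complex.Gamma_ofReal, Complex.Gamma_ofReal, Complex.Gamma_ofReal] at hb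
  have : ((Real.Gamma (3/4) * Real.Gamma (1/2) / Real.Gamma (5/4) : ℝ) : ℂ) =
      ((∫ x in Ioo (0:ℝ) 1, x ^ (-(1/4) : ℝ) * (1 - x) ^ (-(1/2) : ℝ) : ℝ) : ℂ) := by
    have h54c : ((Real.Gamma (5/4) : ℝ) : ℂ) ≠ 0 := by exact_mod_cast h54
    push_cast
    rw [hb, mul_comm, mul_div_assoc, div_self h54c, mul_one]
  exact_mod_cast this.symm

theorem stmt_1 :
    ∫ x in (0:ℝ)..1, x ^ 2 / Real.sqrt (1 - x ^ 4) =
      Real.Gamma (3 / 4) ^ 2 / Real.sqrt (2 * Real.pi) := by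
  have key : (4:ℝ) * ∫ x in Ioo (0:ℝ) 1, x ^ 2 / Real.sqrt (1 - x ^ 4) =
      Real.Gamma (3/4) * Real.Gamma (1/2) / Real.Gamma (5/4) := by
    rw [← subst_step, gamma_val]
  rw [intervalIntegral.integral_of_le zero_le_one, MeasureTheory.integral_Ioc_eq_integral_Ioo]
  have h14 : Real.Gamma (5/4) = (1/4) * Real.Gamma (1/4) := by
    have := Real.Gamma_add_one (s := 1/4) (by norm_num)
    norm_num at this ⊢
    linarith
  have hrefl : Real.Gamma (1/4) * Real.Gamma (3/4) = Real.pi * Real.sqrt 2 := by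
    have := Real.Gamma_mul_Gamma_one_sub (1/4)
    rw [show (1:ℝ) - 1/4 = 3/4 by norm_num] at this
    have h2 : Real.sqrt 2 * Real.sqrt 2 = 2 := Real.mul_self_sqrt (by norm_num)
    have hs2 : (0:ℝ) < Real.sqrt 2 := by positivity
    rw [this, show Real.pi * (1/4) = Real.pi/4 by ring, Real.sin_pi_div_four,
      div_eq_iff (by positivity)]
    nlinarith [h2, Real.pi_pos]
  have h12 : Real.Gamma (1/2) = Real.sqrt Real.pi := Real.Gamma_one_half_eq
  have hG14 : Real.Gamma (1/4) > 0 := Real.Gamma_pos_of_pos (by norm_num)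
  have hG34 : Real.Gamma (3/4) > 0 := Real.Gamma_pos_of_pos (by norm_num)
  have hI : ∫ x in Ioo (0:ℝ) 1, x ^ 2 / Real.sqrt (1 - x ^ 4) =
      Real.Gamma (3/4) * Real.sqrt Real.pi / Real.Gamma (1/4) := by
    have h4 : (4:ℝ) ≠ 0 := by norm_num
    field_simp [h14, h12] at key ⊢
    rw [h14, h12] at key
    linear_combination key
  rw [hI]
  have hG14' : Real.Gamma (1/4) = Real.pi * Real.sqrt 2 / Real.Gamma (3/4) := by
    field_simp [← hrefl]
    exact hrefl
  rw [hG14']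
  rw [Real.sqrt_mul (by norm_num : (0:ℝ) ≤ 2)]
  have hpi : Real.pi = Real.sqrt Real.pi * Real.sqrt Real.pi :=
    (Real.mul_self_sqrt Real.pi_pos.le).symm
  have hs2 : Real.sqrt 2 > 0 := by positivity
  have hsp : Real.sqrt Real.pi > 0 := Real.sqrt_pos.mpr Real.pi_pos
  rw [div_div_eq_mul_div, div_eq_div_iff (by positivity) (by positivity)]
  linear_combination (-(Real.Gamma (3/4) ^ 2 * Real.sqrt 2)) * hpi
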